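/- Let φ : ℝⁿ → ℝ ∪ {+∞} be an even convex function with 0 < ∫ e^{-φ} < +∞, and for m ≥ 1 define φ_m(x) = |x|²/(2m) + inf_z (φ(z) + (m/2)|x−z|²). Then dom(φ_m) = dom(Lφ_m) = ℝⁿ, φ_m and Lφ_m are differentiable and strictly convex on ℝⁿ, and ∇φ_m is a bijection of ℝⁿ. -/

import Mathlib

open MeasureTheory
noncomputable section

abbrev En (n : ℕ) := EuclideanSpace ℝ (Fin n)

/-- `e^{-a}` for `a ∈ ℝ ∪ {+∞}`, with `e^{-∞} = 0`. -/
def expNeg (a : EReal) : ℝ := if a = ⊤ then 0 else Real.exp (-a.toReal)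

/-- The Legendre transform of an `(ℝ ∪ {+∞})`-valued function on `ℝⁿ`. -/
def legT {n : ℕ} (φ : En n → EReal) (y : En n) : EReal :=
  ⨆ x : En n, (((inner ℝ x y : ℝ) : EReal) - φ x)

/-- Convexity for `(ℝ ∪ {+∞})`-valued functions. -/
def ConvexE {n : ℕ} (φ : En n → EReal) : Prop :=
  ∀ x y : En n, ∀ a b : ℝ, 0 ≤ a → 0 ≤ b → a + b = 1 →
    φ (a • x + b • y) ≤ (a : EReal) * φ x + (b : EReal) * φ y

/-- The regularization `φ_m(x) = |x|²/(2m) + inf_z (φ(z) + (m/2)|x−z|²)`. -/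
def phim {n : ℕ} (φ : En n → EReal) (m : ℕ) (x : En n) : EReal :=
  ((‖x‖ ^ 2 / (2 * m) : ℝ) : EReal) +
    ⨅ z : En n, (φ z + (((m : ℝ) / 2 * ‖x - z‖ ^ 2 : ℝ) : EReal))

open Set Filter Topology Asymptotics

local notation "⟪" x ", " y "⟫" => @inner ℝ _ _ x y

section Machinery

def env {n : ℕ} (φ : En n → EReal) (c : ℝ) (u : En n) : EReal :=
  ⨅ z : En n, (φ z + ((c / 2 * ‖u - z‖ ^ 2 : ℝ) : EReal))

def envR {n : ℕ} (φ : En n → EReal) (c : ℝ) (u : En n) : ℝ := (env φ c u).toReal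

variable {n : ℕ} {φ : En n → EReal} {B c : ℝ} {z₀ : En n}

lemma normsq_combo (x y : En n) {a b : ℝ} (ha : 0 ≤ a) (hb : 0 ≤ b) (hab : a + b = 1) :
    ‖a • x + b • y‖ ^ 2 = a * ‖x‖ ^ 2 + b * ‖y‖ ^ 2 - a * b * ‖x - y‖ ^ 2 := by
  have h1 : ‖a • x + b • y‖ ^ 2 = a^2 * ‖x‖^2 + 2 * (a * b * ⟪x, y⟫) + b^2 * ‖y‖^2 := by
    rw [norm_add_sq_real, real_inner_smul_left, real_inner_smul_right, norm_smul, norm_smul,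
      Real.norm_eq_abs, Real.norm_eq_abs, abs_of_nonneg ha, abs_of_nonneg hb]
    ring
  have h2 : ‖x - y‖ ^ 2 = ‖x‖^2 - 2 * ⟪x, y⟫ + ‖y‖^2 := norm_sub_sq_real x y
  linear_combination h1 + a*b*h2 + (a*‖x‖^2 + b*‖y‖^2) * hab

lemma hasGradientAt_of_convex_quad {f : En n → ℝ} (hf : ConvexOn ℝ Set.univ f)
    (u p : En n) (C : ℝ)
    (hub : ∀ h, f (u + h) ≤ f u + ⟪p, h⟫ + C * ‖h‖ ^ 2) :
    HasGradientAt f p u := by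
  set D := |C| + 1 with hD
  have hD0 : 0 < D := by positivity
  have hub' : ∀ h, f (u + h) ≤ f u + ⟪p, h⟫ + D * ‖h‖ ^ 2 := by
    intro h
    have := hub h
    have h2 : C * ‖h‖ ^ 2 ≤ D * ‖h‖ ^ 2 := by
      apply mul_le_mul_of_nonneg_right _ (by positivity)
      rw [hD]; cases abs_cases C with
      | inl h => linarith [h.1]
      | inr h => linarith [h.1]
    linarith
  have hlb : ∀ h, f u + ⟪p, h⟫ - D * ‖h‖ ^ 2 ≤ f (u + h) := by
    intro h
    have hmid : f u ≤ (1/2 : ℝ) * f (u + h) + (1/2 : ℝ) * f (u - h) := by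
      have h3 := hf.2 (mem_univ (u + h)) (mem_univ (u - h))
        (by norm_num : (0:ℝ) ≤ 1/2) (by norm_num : (0:ℝ) ≤ 1/2) (by norm_num)
      have he : (1/2 : ℝ) • (u + h) + (1/2 : ℝ) • (u - h) = u := by
        rw [smul_add, smul_sub]
        rw [show ∀ a b : En n, (1/2:ℝ) • a + (1/2:ℝ) • b + ((1/2:ℝ) • a - (1/2:ℝ) • b) = (1/2:ℝ) • a + (1/2:ℝ) • a from fun a b => by abel]
        rw [← add_smul]; norm_num
      rw [he] at h3
      simpa using h3
    have h4 := hub' (-h)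
    rw [inner_neg_right, norm_neg] at h4
    have : u + -h = u - h := by abel
    rw [this] at h4
    linarith
  rw [hasGradientAt_iff_isLittleO, Asymptotics.isLittleO_iff]
  intro c hc
  have hmem : Metric.ball u (c / D) ∈ nhds u := Metric.ball_mem_nhds u (by positivity)
  filter_upwards [hmem] with x hx
  have hxu : ‖x - u‖ < c / D := by rwa [Metric.mem_ball, dist_eq_norm] at hx
  have h5 := hub' (x - u)
  have h6 := hlb (x - u)
  rw [show u + (x - u) = x by abel] at h5 h6
  have habs : |f x - f u - ⟪p, x - u⟫| ≤ D * ‖x - u‖ ^ 2 := by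
    rw [abs_le]; constructor <;> [linarith; linarith]
  have hto : (InnerProductSpace.toDual ℝ (En n) p) (x - u) = ⟪p, x - u⟫ := rfl
  rw [Real.norm_eq_abs]
  calc |f x - f u - (InnerProductSpace.toDual ℝ (En n) p) (x - u)| ≤ D * ‖x - u‖ ^ 2 := by
        simpa using habs
    _ ≤ c * ‖x - u‖ := by
        rcases eq_or_lt_of_le (norm_nonneg (x - u)) with h0 | h0
        · rw [← h0]; simp
        · have h7 : D * ‖x - u‖ ≤ c := by
            have h8 := (lt_div_iff₀ hD0).mp hxu
            linarith
          nlinarith [h0, h7]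

lemma exists_min_quad {F : En n → ℝ} (hFc : Continuous F) {B : ℝ} (hB : ∀ x, B ≤ F x)
    {c : ℝ} (hc : 0 < c) (u : En n) :
    ∃ xs : En n, ∀ x, F xs + c / 2 * ‖u - xs‖ ^ 2 ≤ F x + c / 2 * ‖u - x‖ ^ 2 := by
  have hGc : Continuous (fun x => F x + c / 2 * ‖u - x‖ ^ 2) :=
    hFc.add (continuous_const.mul (((continuous_const.sub continuous_id).norm).pow 2))
  have hGuB : 0 ≤ F u - B := by linarith [hB u]
  set s : ℝ := Real.sqrt (2 * (F u - B) / c) with hs_def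
  set R : ℝ := s + 1 with hR
  have hs0 : 0 ≤ s := Real.sqrt_nonneg _
  have hR0 : 0 < R := by positivity
  have hball : ∀ x, x ∉ Metric.closedBall u R →
      F u < F x + c / 2 * ‖u - x‖ ^ 2 := by
    intro x hx
    have hd : R < ‖u - x‖ := by
      rw [Metric.mem_closedBall, not_le, dist_comm, dist_eq_norm] at hx
      exact hx
    have h0 : s < ‖u - x‖ := by linarith
    have hs : s ^ 2 = 2 * (F u - B) / c := Real.sq_sqrt (by positivity)
    have h1 : 2 * (F u - B) / c < ‖u - x‖ ^ 2 := by nlinarith [h0, hs0]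
    have h2 : 2 * (F u - B) < ‖u - x‖ ^ 2 * c := (div_lt_iff₀ hc).mp h1
    nlinarith [hB x]
  obtain ⟨xs, _, hxs⟩ := (isCompact_closedBall u R).exists_isMinOn
    ⟨u, Metric.mem_closedBall_self hR0.le⟩ hGc.continuousOn
  refine ⟨xs, fun x => ?_⟩
  by_cases hx : x ∈ Metric.closedBall u R
  · exact hxs hx
  · have h1 : F xs + c / 2 * ‖u - xs‖ ^ 2 ≤ F u + c / 2 * ‖u - u‖ ^ 2 :=
      hxs (Metric.mem_closedBall_self hR0.le)
    have h2 := hball x hx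
    have h3 : ‖u - u‖ = 0 := by simp
    rw [h3] at h1
    nlinarith [h1, h2]

lemma grad_ineq {f : En n → ℝ} (hf : ConvexOn ℝ Set.univ f) {x p : En n}
    (hg : HasGradientAt f p x) (y : En n) : f x + ⟪p, y - x⟫ ≤ f y := by
  set ψ : ℝ → ℝ := fun t => f (x + t • (y - x)) with hψ
  have hγ : ∀ t : ℝ, HasDerivAt (fun s : ℝ => x + s • (y - x)) (y - x) t := by
    intro t
    simpa using ((hasDerivAt_id t).smul_const (y - x)).const_add x
  have hder : HasDerivAt ψ ⟪p, y - x⟫ 0 := by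
    have hF : HasFDerivAt f (InnerProductSpace.toDual ℝ (En n) p) x := hg
    have hF' : HasFDerivAt f (InnerProductSpace.toDual ℝ (En n) p) (x + (0:ℝ) • (y - x)) := by
      simpa using hF
    have := hF'.comp_hasDerivAt (0:ℝ) (hγ 0)
    rw [InnerProductSpace.toDual_apply_apply] at this; exact this
  have hslope : ∀ t ∈ Ioc (0:ℝ) 1, (ψ t - ψ 0) / t ≤ ψ 1 - ψ 0 := by
    intro t ht
    have hcx := hf.2 (mem_univ x) (mem_univ y) (by linarith [ht.2, ht.1] : (0:ℝ) ≤ 1 - t)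
      ht.1.le (by ring)
    have he : (1 - t) • x + t • y = x + t • (y - x) := by
      rw [smul_sub, sub_smul, one_smul]; abel
    rw [he] at hcx
    have hψt : ψ t ≤ (1 - t) * f x + t * f y := by simpa [hψ] using hcx
    have hψ0 : ψ 0 = f x := by simp [hψ]
    have hψ1 : ψ 1 = f y := by simp [hψ]
    rw [div_le_iff₀ ht.1, hψ0, hψ1]
    nlinarith [ht.1]
  have htend : Tendsto (fun t => (ψ t - ψ 0) / t) (𝓝[>] (0:ℝ)) (𝓝 ⟪p, y - x⟫) := by
    have h1 := (hasDerivAt_iff_tendsto_slope.mp hder)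
    have h2 : (𝓝[>] (0:ℝ)) ≤ 𝓝[≠] (0:ℝ) := nhdsWithin_mono _ (fun t ht => ne_of_gt ht)
    have h3 := h1.mono_left h2
    refine h3.congr' ?_
    filter_upwards [self_mem_nhdsWithin] with t ht
    rw [slope_def_field, sub_zero]
  have hle : ⟪p, y - x⟫ ≤ ψ 1 - ψ 0 := by
    refine le_of_tendsto htend ?_
    filter_upwards [Ioc_mem_nhdsGT_of_mem (by norm_num : (0:ℝ) ∈ Ico (0:ℝ) 1)] with t ht
    exact hslope t ht
  have hψ0 : ψ 0 = f x := by simp [hψ]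
  have hψ1 : ψ 1 = f y := by simp [hψ]
  rw [hψ0, hψ1] at hle
  linarith

lemma env_le (u z : En n) : env φ c u ≤ φ z + ((c / 2 * ‖u - z‖ ^ 2 : ℝ) : EReal) :=
  iInf_le _ z

lemma env_lb (hB : ∀ x, ((B : ℝ) : EReal) ≤ φ x) (hc : 0 ≤ c) (u : En n) :
    ((B : ℝ) : EReal) ≤ env φ c u := by
  refine le_iInf fun z => le_trans (hB z) ?_
  have h0 : (0 : EReal) ≤ ((c / 2 * ‖u - z‖ ^ 2 : ℝ) : EReal) := by
    rw [← EReal.coe_zero, EReal.coe_le_coe_iff]; positivity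
  calc φ z = φ z + 0 := by rw [add_zero]
    _ ≤ _ := add_le_add le_rfl h0

lemma env_ne_top (hbot : ∀ x, φ x ≠ ⊥) (hz₀ : φ z₀ ≠ ⊤) (u : En n) : env φ c u ≠ ⊤ := by
  have h1 := env_le (φ := φ) (c := c) u z₀
  have h2 : φ z₀ + ((c / 2 * ‖u - z₀‖ ^ 2 : ℝ) : EReal) ≠ ⊤ := by
    rw [← EReal.coe_toReal (hz₀) (hbot z₀), ← EReal.coe_add]
    exact EReal.coe_ne_top _
  exact fun h => h2 (top_le_iff.mp (h ▸ h1))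

lemma env_ne_bot (hB : ∀ x, ((B : ℝ) : EReal) ≤ φ x) (hc : 0 ≤ c) (u : En n) :
    env φ c u ≠ ⊥ := by
  intro h
  have := env_lb hB hc u
  rw [h, le_bot_iff] at this
  exact EReal.coe_ne_bot B this

lemma env_eq_coe (hbot : ∀ x, φ x ≠ ⊥) (hB : ∀ x, ((B : ℝ) : EReal) ≤ φ x)
    (hz₀ : φ z₀ ≠ ⊤) (hc : 0 ≤ c) (u : En n) :
    env φ c u = ((envR φ c u : ℝ) : EReal) :=
  (EReal.coe_toReal (env_ne_top hbot hz₀ u) (env_ne_bot hB hc u)).symm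

lemma envR_le (hbot : ∀ x, φ x ≠ ⊥) (hB : ∀ x, ((B : ℝ) : EReal) ≤ φ x)
    (hz₀ : φ z₀ ≠ ⊤) (hc : 0 ≤ c) (u : En n) {z : En n} (hz : φ z ≠ ⊤) :
    envR φ c u ≤ (φ z).toReal + c / 2 * ‖u - z‖ ^ 2 := by
  have h1 := env_le (φ := φ) (c := c) u z
  rw [env_eq_coe hbot hB hz₀ hc u, ← EReal.coe_toReal hz (hbot z), ← EReal.coe_add,
    EReal.coe_le_coe_iff] at h1
  exact h1

lemma envR_lb (hbot : ∀ x, φ x ≠ ⊥) (hB : ∀ x, ((B : ℝ) : EReal) ≤ φ x)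
    (hz₀ : φ z₀ ≠ ⊤) (hc : 0 ≤ c) (u : En n) : B ≤ envR φ c u := by
  have h1 := env_lb hB hc u
  rw [env_eq_coe hbot hB hz₀ hc u, EReal.coe_le_coe_iff] at h1
  exact h1

lemma envR_exists (hbot : ∀ x, φ x ≠ ⊥) (hB : ∀ x, ((B : ℝ) : EReal) ≤ φ x)
    (hz₀ : φ z₀ ≠ ⊤) (hc : 0 ≤ c) (u : En n) {ε : ℝ} (hε : 0 < ε) :
    ∃ z, φ z ≠ ⊤ ∧ (φ z).toReal + c / 2 * ‖u - z‖ ^ 2 < envR φ c u + ε := by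
  have h1 : env φ c u < ((envR φ c u + ε : ℝ) : EReal) := by
    rw [env_eq_coe hbot hB hz₀ hc u, EReal.coe_lt_coe_iff]
    linarith
  rw [env, iInf_lt_iff] at h1
  obtain ⟨z, hz⟩ := h1
  have hzt : φ z ≠ ⊤ := by
    intro h
    rw [h] at hz
    simp [EReal.top_add_of_ne_bot (EReal.coe_ne_bot _)] at hz
    exact (not_top_lt hz)
  refine ⟨z, hzt, ?_⟩
  rw [← EReal.coe_toReal hzt (hbot z), ← EReal.coe_add, EReal.coe_lt_coe_iff] at hz
  exact hz

lemma envR_convexOn (hbot : ∀ x, φ x ≠ ⊥) (hconv : ConvexE φ)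
    (hB : ∀ x, ((B : ℝ) : EReal) ≤ φ x) (hz₀ : φ z₀ ≠ ⊤) (hc : 0 ≤ c) :
    ConvexOn ℝ Set.univ (envR φ c) := by
  refine ⟨convex_univ, fun x _ y _ a b ha hb hab => ?_⟩
  rcases eq_or_lt_of_le ha with ha0 | ha0
  · have hb1 : b = 1 := by linarith
    rw [← ha0, hb1]; simp
  rcases eq_or_lt_of_le hb with hb0 | hb0
  · have ha1 : a = 1 := by linarith
    rw [← hb0, ha1]; simp
  simp only [smul_eq_mul]
  refine le_of_forall_pos_le_add fun ε hε => ?_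
  obtain ⟨z₁, hz₁t, hz₁⟩ := envR_exists hbot hB hz₀ hc x hε
  obtain ⟨z₂, hz₂t, hz₂⟩ := envR_exists hbot hB hz₀ hc y hε
  have hφ := hconv z₁ z₂ a b ha hb hab
  rw [← EReal.coe_toReal hz₁t (hbot z₁), ← EReal.coe_toReal hz₂t (hbot z₂),
    ← EReal.coe_mul, ← EReal.coe_mul, ← EReal.coe_add] at hφ
  have hφt : φ (a • z₁ + b • z₂) ≠ ⊤ :=
    fun h => EReal.coe_ne_top _ (top_le_iff.mp (h ▸ hφ))
  have h2 : (φ (a • z₁ + b • z₂)).toReal ≤ a * (φ z₁).toReal + b * (φ z₂).toReal := by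
    rw [← EReal.coe_le_coe_iff, EReal.coe_toReal hφt (hbot _)]
    exact hφ
  have h1 := envR_le hbot hB hz₀ hc (a • x + b • y) hφt
  have h3 : (a • x + b • y) - (a • z₁ + b • z₂) = a • (x - z₁) + b • (y - z₂) := by
    rw [smul_sub, smul_sub]; abel
  have h4 : ‖a • (x - z₁) + b • (y - z₂)‖ ^ 2
      ≤ a * ‖x - z₁‖ ^ 2 + b * ‖y - z₂‖ ^ 2 := by
    have h5 := normsq_combo (x - z₁) (y - z₂) ha hb hab
    nlinarith [mul_nonneg (mul_nonneg ha hb) (sq_nonneg ‖(x - z₁) - (y - z₂)‖)]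
  rw [h3] at h1
  have e3 : c / 2 * ‖a • (x - z₁) + b • (y - z₂)‖ ^ 2
      ≤ c / 2 * (a * ‖x - z₁‖ ^ 2 + b * ‖y - z₂‖ ^ 2) :=
    mul_le_mul_of_nonneg_left h4 (by positivity)
  have e1 : a * ((φ z₁).toReal + c / 2 * ‖x - z₁‖ ^ 2) ≤ a * (envR φ c x + ε) :=
    mul_le_mul_of_nonneg_left hz₁.le ha
  have e2 : b * ((φ z₂).toReal + c / 2 * ‖y - z₂‖ ^ 2) ≤ b * (envR φ c y + ε) :=
    mul_le_mul_of_nonneg_left hz₂.le hb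
  nlinarith [h1, h2, e1, e2, e3]

lemma envR_continuous (hbot : ∀ x, φ x ≠ ⊥) (hconv : ConvexE φ)
    (hB : ∀ x, ((B : ℝ) : EReal) ≤ φ x) (hz₀ : φ z₀ ≠ ⊤) (hc : 0 ≤ c) :
    Continuous (envR φ c) := by
  rw [← continuousOn_univ]
  exact (envR_convexOn hbot hconv hB hz₀ hc).continuousOn isOpen_univ

/-- Semigroup property + attainment: `envR φ c u` is the attained Moreau envelope
(with parameter `2c`) of the continuous convex function `envR φ (2c)`. -/
lemma env_ub (hbot : ∀ x, φ x ≠ ⊥)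
    (hB : ∀ x, ((B : ℝ) : EReal) ≤ φ x) (hz₀ : φ z₀ ≠ ⊤) (hc : 0 < c) (u w : En n) :
    envR φ c u ≤ envR φ (2 * c) w + c * ‖u - w‖ ^ 2 := by
  have hc2 : (0:ℝ) ≤ 2 * c := by linarith
  refine le_of_forall_pos_le_add fun ε hε => ?_
  obtain ⟨z, hzt, hz⟩ := envR_exists hbot hB hz₀ hc2 w hε
  have h1 := envR_le hbot hB hz₀ hc.le u hzt
  have h2 : ‖u - z‖ ≤ ‖u - w‖ + ‖w - z‖ := by
    calc ‖u - z‖ = ‖(u - w) + (w - z)‖ := by rw [sub_add_sub_cancel]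
      _ ≤ _ := norm_add_le _ _
  have hq : ‖u - z‖ ^ 2 ≤ 2 * ‖u - w‖ ^ 2 + 2 * ‖w - z‖ ^ 2 := by
    nlinarith [mul_self_le_mul_self (norm_nonneg (u - z)) h2, sq_nonneg (‖u - w‖ - ‖w - z‖)]
  have h3 : c / 2 * ‖u - z‖ ^ 2 ≤ c * ‖u - w‖ ^ 2 + c * ‖w - z‖ ^ 2 := by
    have := mul_le_mul_of_nonneg_left hq hc.le
    linarith
  have h4 : (2 * c) / 2 * ‖w - z‖ ^ 2 = c * ‖w - z‖ ^ 2 := by ring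
  rw [h4] at hz
  linarith

/-- Semigroup property + attainment: `envR φ c u` is the attained Moreau envelope
(with parameter `2c`) of the continuous convex function `envR φ (2c)`. -/
lemma env_min (hbot : ∀ x, φ x ≠ ⊥) (hconv : ConvexE φ)
    (hB : ∀ x, ((B : ℝ) : EReal) ≤ φ x) (hz₀ : φ z₀ ≠ ⊤) (hc : 0 < c) (u : En n) :
    ∃ ws : En n, (∀ w, envR φ c u ≤ envR φ (2 * c) w + c * ‖u - w‖ ^ 2) ∧
      envR φ c u = envR φ (2 * c) ws + c * ‖u - ws‖ ^ 2 := by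
  have hc2 : (0:ℝ) ≤ 2 * c := by linarith
  have hub : ∀ w, envR φ c u ≤ envR φ (2 * c) w + c * ‖u - w‖ ^ 2 :=
    env_ub hbot hB hz₀ hc u
  -- attainment
  obtain ⟨ws, hws⟩ := exists_min_quad (F := envR φ (2 * c))
    (envR_continuous hbot hconv hB hz₀ hc2) (envR_lb hbot hB hz₀ hc2) (c := 2 * c)
    (by linarith) u
  refine ⟨ws, hub, le_antisymm (hub ws) ?_⟩
  -- lower bound: envR (2c) ws + c‖u - ws‖² ≤ envR φ c u, by testing the midpoint
  have key : ∀ z, ((envR φ (2 * c) ws + c * ‖u - ws‖ ^ 2 : ℝ) : EReal) ≤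
      φ z + ((c / 2 * ‖u - z‖ ^ 2 : ℝ) : EReal) := by
    intro z
    by_cases hzt : φ z = ⊤
    · rw [hzt, EReal.top_add_of_ne_bot (EReal.coe_ne_bot _)]
      exact le_top
    set w₀ : En n := (1/2 : ℝ) • (u + z) with hw₀
    have h1 := hws w₀
    have h2 : envR φ (2 * c) w₀ ≤ (φ z).toReal + c * ‖w₀ - z‖ ^ 2 := by
      have h3 := envR_le hbot hB hz₀ hc2 w₀ hzt
      have h4 : (2 * c) / 2 * ‖w₀ - z‖ ^ 2 = c * ‖w₀ - z‖ ^ 2 := by ring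
      rwa [h4] at h3
    have h5 : w₀ - z = (1/2 : ℝ) • (u - z) := by rw [hw₀]; module
    have h6 : u - w₀ = (1/2 : ℝ) • (u - z) := by rw [hw₀]; module
    have h7 : ‖(1/2 : ℝ) • (u - z)‖ ^ 2 = 1/4 * ‖u - z‖ ^ 2 := by
      rw [norm_smul, Real.norm_eq_abs]
      rw [show |(1:ℝ)/2| = 1/2 from by norm_num]
      ring
    rw [h5, h7] at h2
    rw [h6, h7] at h1
    rw [← EReal.coe_toReal hzt (hbot z), ← EReal.coe_add, EReal.coe_le_coe_iff]
    nlinarith [h1, h2]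
  have h9 : ((envR φ (2 * c) ws + c * ‖u - ws‖ ^ 2 : ℝ) : EReal) ≤ env φ c u :=
    le_iInf key
  rw [env_eq_coe hbot hB hz₀ hc.le u, EReal.coe_le_coe_iff] at h9
  exact h9

lemma strictConvexOn_const_mul_normsq {c : ℝ} (hc : 0 < c) :
    StrictConvexOn ℝ Set.univ (fun x : En n => c * ‖x‖ ^ 2) := by
  refine ⟨convex_univ, fun x _ y _ hxy a b ha hb hab => ?_⟩
  have h := normsq_combo x y ha.le hb.le hab
  have hd : 0 < ‖x - y‖ ^ 2 := pow_pos (norm_pos_iff.2 (sub_ne_zero.2 hxy)) 2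
  simp only [smul_eq_mul]
  rw [h]
  nlinarith [mul_pos (mul_pos ha hb) hd]

lemma normsq_decomp (a b : En n) : ‖b‖ ^ 2 = ‖a‖ ^ 2 + 2 * ⟪a, b - a⟫ + ‖b - a‖ ^ 2 := by
  have h := norm_add_sq_real a (b - a)
  rw [show a + (b - a) = b from by abel] at h
  exact h

lemma quad_decomp (a b : En n) {c : ℝ} (hc : c ≠ 0) :
    ‖b‖ ^ 2 / (2 * c) = ‖a‖ ^ 2 / (2 * c) + ⟪a, b - a⟫ / c + ‖b - a‖ ^ 2 / (2 * c) := by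
  have h := normsq_decomp a b
  linear_combination h / (2*c)

end Machinery

set_option maxHeartbeats 2000000 in
theorem stmt11 {n : ℕ} (φ : En n → EReal)
    (hbot : ∀ x, φ x ≠ ⊥) (heven : ∀ x, φ (-x) = φ x) (hconv : ConvexE φ)
    (hi : 0 < ∫⁻ x, ENNReal.ofReal (expNeg (φ x)) ∧
      ∫⁻ x, ENNReal.ofReal (expNeg (φ x)) < ⊤)
    (m : ℕ) (hm : 1 ≤ m) :
    (∀ x, phim φ m x ≠ ⊤ ∧ phim φ m x ≠ ⊥) ∧
    (∀ y, legT (phim φ m) y ≠ ⊤ ∧ legT (phim φ m) y ≠ ⊥) ∧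
    Differentiable ℝ (fun x => (phim φ m x).toReal) ∧
    StrictConvexOn ℝ Set.univ (fun x => (phim φ m x).toReal) ∧
    Differentiable ℝ (fun y => (legT (phim φ m) y).toReal) ∧
    StrictConvexOn ℝ Set.univ (fun y => (legT (phim φ m) y).toReal) ∧
    Function.Bijective (gradient (fun x => (phim φ m x).toReal)) := by
  classical
  have hm0 : (0:ℝ) < (m:ℝ) := by
    have : 0 < m := lt_of_lt_of_le Nat.zero_lt_one hm
    exact_mod_cast this
  -- basic facts about φ
  have key : ∀ x, φ x ≠ ⊤ →
      φ 0 ≤ (((1/2:ℝ) * (φ x).toReal + (1/2:ℝ) * (φ x).toReal : ℝ) : EReal) := by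
    intro x hx
    have h2 := hconv x (-x) (1/2) (1/2) (by norm_num) (by norm_num) (by norm_num)
    rw [heven x] at h2
    have he : (1/2:ℝ) • x + (1/2:ℝ) • (-x) = (0 : En n) := by module
    rw [he] at h2
    rw [← EReal.coe_toReal hx (hbot x), ← EReal.coe_mul, ← EReal.coe_add] at h2
    exact h2
  have h0top : φ (0 : En n) ≠ ⊤ := by
    by_contra h0
    have hall : ∀ x, φ x = ⊤ := by
      intro x
      by_contra hx
      have h3 := key x hx
      rw [h0] at h3
      exact EReal.coe_ne_top _ (top_le_iff.mp h3)
    have hz : ∀ x : En n, ENNReal.ofReal (expNeg (φ x)) = 0 := by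
      intro x; rw [hall x]; simp [expNeg]
    have h4 : (∫⁻ x, ENNReal.ofReal (expNeg (φ x))) = 0 := by
      simp only [hz, lintegral_const, zero_mul]
    rw [h4] at hi
    exact lt_irrefl _ hi.1
  have hlow : ∀ x, φ 0 ≤ φ x := by
    intro x
    by_cases hx : φ x = ⊤
    · rw [hx]; exact le_top
    · have h3 := key x hx
      rw [show (1/2:ℝ) * (φ x).toReal + (1/2:ℝ) * (φ x).toReal = (φ x).toReal from by ring,
        EReal.coe_toReal hx (hbot x)] at h3
      exact h3
  set B : ℝ := (φ 0).toReal with hBdef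
  have hB : ∀ x, ((B : ℝ) : EReal) ≤ φ x := by
    intro x; rw [hBdef, EReal.coe_toReal h0top (hbot 0)]; exact hlow x
  -- the envelope E and f
  set E : En n → ℝ := envR φ (m:ℝ) with hEdef
  have hEconv : ConvexOn ℝ univ E := envR_convexOn hbot hconv hB h0top hm0.le
  have phim_eq : ∀ x, phim φ m x = ((‖x‖^2 / (2*(m:ℝ)) + E x : ℝ) : EReal) := by
    intro x
    have h1 : phim φ m x = ((‖x‖^2 / (2*(m:ℝ)) : ℝ) : EReal) + env φ (m:ℝ) x := rfl
    rw [h1, env_eq_coe hbot hB h0top hm0.le, ← EReal.coe_add, hEdef]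
  set f : En n → ℝ := fun x => (phim φ m x).toReal with hfdef
  have hfx : ∀ x, f x = ‖x‖^2 / (2*(m:ℝ)) + E x := by
    intro x
    rw [hfdef]
    simp only
    rw [phim_eq x, EReal.toReal_coe]
  have hffun : f = fun x => ‖x‖^2 / (2*(m:ℝ)) + E x := funext hfx
  -- strict convexity of f
  have hqstrict : StrictConvexOn ℝ univ (fun x : En n => ‖x‖^2/(2*(m:ℝ))) := by
    have h1 := strictConvexOn_const_mul_normsq (n := n)
      (show (0:ℝ) < 1/(2*(m:ℝ)) by positivity)
    have h2 : (fun x : En n => 1/(2*(m:ℝ)) * ‖x‖^2) = fun x : En n => ‖x‖^2/(2*(m:ℝ)) := by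
      funext x; ring
    rwa [h2] at h1
  have hfstrict : StrictConvexOn ℝ univ f := by
    rw [hffun]; exact hqstrict.add_convexOn hEconv
  have hfconv : ConvexOn ℝ univ f := hfstrict.convexOn
  -- gradient of the quadratic part
  have hgradq : ∀ u : En n, HasGradientAt (fun x : En n => ‖x‖^2/(2*(m:ℝ)))
      ((1/(m:ℝ)) • u) u := by
    intro u
    apply hasGradientAt_of_convex_quad hqstrict.convexOn u _ (1/(2*(m:ℝ)))
    intro h
    apply le_of_eq
    rw [norm_add_sq_real, real_inner_smul_left]
    have hmne : (m:ℝ) ≠ 0 := ne_of_gt hm0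
    field_simp
  have hgrad_add : ∀ (g₁ g₂ : En n → ℝ) (p₁ p₂ : En n) (u : En n), HasGradientAt g₁ p₁ u →
      HasGradientAt g₂ p₂ u → HasGradientAt (fun x => g₁ x + g₂ x) (p₁ + p₂) u := by
    intro g₁ g₂ p₁ p₂ u h1 h2
    rw [hasGradientAt_iff_hasFDerivAt] at h1 h2 ⊢
    rw [map_add]; exact h1.add h2
  -- gradient of E with semiconcavity
  have hEgrad : ∀ u : En n, ∃ p, HasGradientAt E p u ∧
      ∀ h, E (u + h) ≤ E u + ⟪p, h⟫ + (m:ℝ) * ‖h‖^2 := by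
    intro u
    obtain ⟨ws, hub, heq⟩ := env_min hbot hconv hB h0top hm0 u
    have hubgen : ∀ h : En n, E (u + h) ≤ E u + ⟪(2*(m:ℝ)) • (u - ws), h⟫ + (m:ℝ) * ‖h‖^2 := by
      intro h
      have h1 : envR φ (m:ℝ) (u + h) ≤ envR φ (2*(m:ℝ)) ws + (m:ℝ) * ‖(u + h) - ws‖^2 :=
        env_ub hbot hB h0top hm0 (u + h) ws
      have h2 : (u + h) - ws = (u - ws) + h := by abel
      have h3 : (m:ℝ) * ‖(u - ws) + h‖^2
          = (m:ℝ) * ‖u - ws‖^2 + 2*(m:ℝ)*⟪u - ws, h⟫ + (m:ℝ)*‖h‖^2 := by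
        rw [norm_add_sq_real]; ring
      have h4 : ⟪(2*(m:ℝ)) • (u - ws), h⟫ = 2*(m:ℝ)*⟪u - ws, h⟫ := by
        rw [real_inner_smul_left]
      rw [h2, h3] at h1
      have heq' : E u = envR φ (2*(m:ℝ)) ws + (m:ℝ) * ‖u - ws‖^2 := heq
      have h1' : E (u + h) ≤ envR φ (2*(m:ℝ)) ws
          + ((m:ℝ) * ‖u - ws‖^2 + 2*(m:ℝ)*⟪u - ws, h⟫ + (m:ℝ)*‖h‖^2) := h1
      rw [h4]
      linarith
    exact ⟨(2*(m:ℝ)) • (u - ws), hasGradientAt_of_convex_quad hEconv u _ ((m:ℝ)) hubgen,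
      hubgen⟩
  set A : ℝ := 1/(2*(m:ℝ)) + (m:ℝ) with hA
  have hA0 : 0 < A := by rw [hA]; positivity
  -- gradient of f with semiconcavity
  have hfgrad : ∀ u : En n, ∃ p, HasGradientAt f p u ∧
      ∀ h, f (u + h) ≤ f u + ⟪p, h⟫ + A * ‖h‖^2 := by
    intro u
    obtain ⟨pE, hpE, hubE⟩ := hEgrad u
    refine ⟨(1/(m:ℝ)) • u + pE, ?_, ?_⟩
    · have h1 := hgrad_add _ _ _ _ u (hgradq u) hpE
      rw [hffun]; exact h1
    · intro h
      have h1 := hubE h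
      have h2 : ‖u + h‖^2/(2*(m:ℝ)) = ‖u‖^2/(2*(m:ℝ)) + ⟪u,h⟫/(m:ℝ) + ‖h‖^2/(2*(m:ℝ)) := by
        rw [norm_add_sq_real]
        have hmne : (m:ℝ) ≠ 0 := ne_of_gt hm0
        field_simp
      have h3 : ⟪(1/(m:ℝ)) • u + pE, h⟫ = ⟪u,h⟫/(m:ℝ) + ⟪pE, h⟫ := by
        rw [inner_add_left, real_inner_smul_left]; ring
      rw [hfx (u+h), hfx u, h2, h3, hA]
      have h5 : (1/(2*(m:ℝ)) + (m:ℝ)) * ‖h‖^2 = ‖h‖^2/(2*(m:ℝ)) + (m:ℝ)*‖h‖^2 := by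
        field_simp
      rw [h5]
      linarith
  have hdifff : Differentiable ℝ f := fun u => ((hfgrad u).choose_spec.1).differentiableAt
  -- Part 1
  have part1 : ∀ x, phim φ m x ≠ ⊤ ∧ phim φ m x ≠ ⊥ := by
    intro x; rw [phim_eq x]; exact ⟨EReal.coe_ne_top _, EReal.coe_ne_bot _⟩
  -- Legendre transform
  have hEcont : Continuous E := envR_continuous hbot hconv hB h0top hm0.le
  have hElb : ∀ x, B ≤ E x := envR_lb hbot hB h0top hm0.le
  have hc' : (0:ℝ) < 1/(m:ℝ) := by positivity
  choose xs hxs using fun y : En n => exists_min_quad hEcont hElb hc' ((m:ℝ) • y)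
  have hid : ∀ (y x : En n), ⟪x, y⟫ - f x
      = (m:ℝ)/2 * ‖y‖^2 - (E x + (1/(m:ℝ))/2 * ‖(m:ℝ) • y - x‖^2) := by
    intro y x
    have h1 : ‖(m:ℝ) • y - x‖^2 = (m:ℝ)^2*‖y‖^2 - 2*((m:ℝ)*⟪y,x⟫) + ‖x‖^2 := by
      rw [norm_sub_sq_real, real_inner_smul_left, norm_smul, Real.norm_eq_abs,
        abs_of_pos hm0]
      ring
    rw [hfx x, h1, real_inner_comm x y]
    have hmne : (m:ℝ) ≠ 0 := ne_of_gt hm0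
    field_simp
    ring
  have hLmax : ∀ (y x : En n), ⟪x, y⟫ - f x ≤ ⟪xs y, y⟫ - f (xs y) := by
    intro y x
    have h1 := hxs y x
    have h2 := hid y x
    have h3 := hid y (xs y)
    linarith
  have hlegT : ∀ y, legT (phim φ m) y = ((⟪xs y, y⟫ - f (xs y) : ℝ) : EReal) := by
    intro y
    have hcoe : ∀ x, phim φ m x = ((f x : ℝ) : EReal) := by
      intro x; rw [phim_eq x, hfx x]
    apply le_antisymm
    · refine iSup_le fun x => ?_
      rw [hcoe x, ← EReal.coe_sub, EReal.coe_le_coe_iff]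
      exact hLmax y x
    · refine le_trans ?_ (le_iSup _ (xs y))
      rw [hcoe (xs y), ← EReal.coe_sub]
  have part2 : ∀ y, legT (phim φ m) y ≠ ⊤ ∧ legT (phim φ m) y ≠ ⊥ := fun y => by
    rw [hlegT y]; exact ⟨EReal.coe_ne_top _, EReal.coe_ne_bot _⟩
  set L : En n → ℝ := fun y => (legT (phim φ m) y).toReal with hLdef
  have hLy : ∀ y, L y = ⟪xs y, y⟫ - f (xs y) := by
    intro y
    rw [hLdef]
    simp only
    rw [hlegT y, EReal.toReal_coe]
  have hLmax' : ∀ (y x : En n), ⟪x, y⟫ - f x ≤ L y := fun y x => by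
    rw [hLy]; exact hLmax y x
  -- the gradient of f at xs y is y
  have hgradfxs : ∀ y, HasGradientAt f y (xs y) := by
    intro y
    obtain ⟨p, hp, _⟩ := hfgrad (xs y)
    have hinner : HasFDerivAt (fun x : En n => ⟪x, y⟫)
        (InnerProductSpace.toDual ℝ (En n) y) (xs y) := by
      have h1 := (InnerProductSpace.toDual ℝ (En n) y).hasFDerivAt (x := xs y)
      apply h1.congr_of_eventuallyEq
      filter_upwards with x
      rw [InnerProductSpace.toDual_apply_apply]
      exact real_inner_comm y x
    have hsub : HasFDerivAt (fun x : En n => ⟪x, y⟫ - f x)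
        (InnerProductSpace.toDual ℝ (En n) y - InnerProductSpace.toDual ℝ (En n) p) (xs y) :=
      hinner.sub (hasGradientAt_iff_hasFDerivAt.mp hp)
    have hmax : IsLocalMax (fun x : En n => ⟪x, y⟫ - f x) (xs y) := by
      apply IsMaxOn.isLocalMax (s := univ) _ Filter.univ_mem
      intro x _
      exact hLmax y x
    have h0 := hmax.hasFDerivAt_eq_zero hsub
    have hyp : p = y :=
      ((InnerProductSpace.toDual ℝ (En n)).injective (sub_eq_zero.mp h0)).symm
    rw [hyp] at hp; exact hp
  -- convexity of L
  have hLconv : ConvexOn ℝ univ L := by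
    refine ⟨convex_univ, fun y₁ _ y₂ _ a b ha hb hab => ?_⟩
    simp only [smul_eq_mul]
    rw [hLy (a • y₁ + b • y₂)]
    have h1 : ⟪xs (a•y₁+b•y₂), a•y₁+b•y₂⟫
        = a * ⟪xs (a•y₁+b•y₂), y₁⟫ + b * ⟪xs (a•y₁+b•y₂), y₂⟫ := by
      rw [inner_add_right, real_inner_smul_right, real_inner_smul_right]
    have h2 := mul_le_mul_of_nonneg_left (hLmax' y₁ (xs (a•y₁+b•y₂))) ha
    have h3 := mul_le_mul_of_nonneg_left (hLmax' y₂ (xs (a•y₁+b•y₂))) hb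
    have h4 : a * f (xs (a•y₁+b•y₂)) + b * f (xs (a•y₁+b•y₂)) = f (xs (a•y₁+b•y₂)) := by
      rw [← add_mul, hab, one_mul]
    rw [h1]
    nlinarith [h2, h3, h4]
  -- quadratic upper bound for L
  have hLub : ∀ y h, L (y + h) ≤ L y + ⟪xs y, h⟫ + ((m:ℝ)/2) * ‖h‖^2 := by
    intro y h
    obtain ⟨pE, hpE, _⟩ := hEgrad (xs y)
    have hfg : HasGradientAt f ((1/(m:ℝ)) • (xs y) + pE) (xs y) := by
      have h1 := hgrad_add _ _ _ _ (xs y) (hgradq (xs y)) hpE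
      rw [hffun]; exact h1
    have hpE_eq : (1/(m:ℝ)) • (xs y) + pE = y := (hfg.unique (hgradfxs y))
    have hEq := grad_ineq hEconv hpE (xs (y + h))
    have hmne : (m:ℝ) ≠ 0 := ne_of_gt hm0
    have hq : ‖xs (y+h)‖^2/(2*(m:ℝ)) = ‖xs y‖^2/(2*(m:ℝ))
        + ⟪xs y, xs (y+h) - xs y⟫/(m:ℝ) + ‖xs (y+h) - xs y‖^2/(2*(m:ℝ)) :=
      quad_decomp (xs y) (xs (y+h)) hmne
    have h5 : ⟪pE, xs (y+h) - xs y⟫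
        = ⟪y, xs (y+h) - xs y⟫ - ⟪xs y, xs (y+h) - xs y⟫/(m:ℝ) := by
      have hpe2 : pE = y - (1/(m:ℝ)) • (xs y) := eq_sub_of_add_eq' hpE_eq
      rw [hpe2, inner_sub_left, real_inner_smul_left]
      ring
    have hstrong : f (xs y) + ⟪y, xs (y+h) - xs y⟫
        + 1/(2*(m:ℝ)) * ‖xs (y+h) - xs y‖^2 ≤ f (xs (y+h)) := by
      rw [hfx (xs (y+h)), hfx (xs y), hq]
      have h6 : 1/(2*(m:ℝ)) * ‖xs (y+h) - xs y‖^2 = ‖xs (y+h) - xs y‖^2/(2*(m:ℝ)) := by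
        ring
      rw [h6]
      linarith [hEq, h5]
    have hL1 : L (y + h) = ⟪xs (y+h), y + h⟫ - f (xs (y+h)) := hLy (y+h)
    have h6 : ⟪xs (y+h), y + h⟫ = ⟪xs (y+h), y⟫ + ⟪xs (y+h), h⟫ := inner_add_right _ _ _
    have h7 : ⟪xs (y+h), y⟫ - ⟪y, xs (y+h) - xs y⟫ = ⟪xs y, y⟫ := by
      rw [inner_sub_right, real_inner_comm y (xs (y+h)), real_inner_comm y (xs y)]
      ring
    have h8 : ⟪xs (y+h), h⟫ = ⟪xs y, h⟫ + ⟪xs (y+h) - xs y, h⟫ := by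
      rw [inner_sub_left]; ring
    have h9 : ⟪xs (y+h) - xs y, h⟫ ≤ ‖xs (y+h) - xs y‖ * ‖h‖ := real_inner_le_norm _ _
    have h10 : ‖xs (y+h) - xs y‖ * ‖h‖ - 1/(2*(m:ℝ)) * ‖xs (y+h) - xs y‖^2
        ≤ (m:ℝ)/2 * ‖h‖^2 := by
      have h11 : 0 ≤ (‖xs (y+h) - xs y‖ - (m:ℝ)*‖h‖)^2 := sq_nonneg _
      have h12 : 0 < 2*(m:ℝ) := by linarith
      have h20 : (‖xs (y+h) - xs y‖ * ‖h‖ - 1/(2*(m:ℝ)) * ‖xs (y+h) - xs y‖^2) * (2*(m:ℝ))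
          ≤ ((m:ℝ)/2 * ‖h‖^2) * (2*(m:ℝ)) := by
        have hexp1 : (‖xs (y+h) - xs y‖ * ‖h‖ - 1/(2*(m:ℝ)) * ‖xs (y+h) - xs y‖^2) * (2*(m:ℝ))
            = 2*(m:ℝ)*(‖xs (y+h) - xs y‖ * ‖h‖) - ‖xs (y+h) - xs y‖^2 := by
          rw [sub_mul, one_div_mul_eq_div, div_mul_cancel₀ _ (ne_of_gt h12)]
          ring
        have hexp2 : ((m:ℝ)/2 * ‖h‖^2) * (2*(m:ℝ)) = (m:ℝ)^2*‖h‖^2 := by ring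
        rw [hexp1, hexp2]
        nlinarith [h11]
      exact le_of_mul_le_mul_right h20 h12
    have hLy' : L y = ⟪xs y, y⟫ - f (xs y) := hLy y
    rw [hL1, h6, h8]
    linarith [hstrong, h7, h9, h10, hLy']
  have hLgrad : ∀ y, HasGradientAt L (xs y) y := fun y =>
    hasGradientAt_of_convex_quad hLconv y (xs y) ((m:ℝ)/2) (hLub y)
  have hdiffL : Differentiable ℝ L := fun y => (hLgrad y).differentiableAt
  -- strict convexity of L
  have hLstrict : StrictConvexOn ℝ univ L := by
    refine ⟨convex_univ, fun y₁ _ y₂ _ hne a b ha hb hab => ?_⟩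
    simp only [smul_eq_mul]
    obtain ⟨p, hp, hub⟩ := hfgrad (xs (a • y₁ + b • y₂))
    have hpy : p = a • y₁ + b • y₂ := hp.unique (hgradfxs (a • y₁ + b • y₂))
    rw [hpy] at hub
    have hs0 : (0:ℝ) < 1/(2*A) := by positivity
    have hbound : ∀ y' : En n, ⟪xs (a • y₁ + b • y₂), y'⟫ - f (xs (a • y₁ + b • y₂))
        + (1/(2*A))/2 * ‖y' - (a • y₁ + b • y₂)‖^2 ≤ L y' := by
      intro y'
      have h1 := hLmax' y' (xs (a • y₁ + b • y₂) + (1/(2*A)) • (y' - (a • y₁ + b • y₂)))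
      have h2 := hub ((1/(2*A)) • (y' - (a • y₁ + b • y₂)))
      have h3 : ⟪xs (a • y₁ + b • y₂) + (1/(2*A)) • (y' - (a • y₁ + b • y₂)), y'⟫
          = ⟪xs (a • y₁ + b • y₂), y'⟫ + (1/(2*A)) * ⟪y' - (a • y₁ + b • y₂), y'⟫ := by
        rw [inner_add_left, real_inner_smul_left]
      have h4 : ⟪a • y₁ + b • y₂, (1/(2*A)) • (y' - (a • y₁ + b • y₂))⟫
          = (1/(2*A)) * ⟪y' - (a • y₁ + b • y₂), a • y₁ + b • y₂⟫ := by
        rw [real_inner_smul_right, real_inner_comm]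
      have h5 : ‖(1/(2*A)) • (y' - (a • y₁ + b • y₂))‖^2
          = (1/(2*A))^2 * ‖y' - (a • y₁ + b • y₂)‖^2 := by
        rw [norm_smul, Real.norm_eq_abs, abs_of_pos hs0]; ring
      have h6 : ⟪y' - (a • y₁ + b • y₂), y'⟫ - ⟪y' - (a • y₁ + b • y₂), a • y₁ + b • y₂⟫
          = ‖y' - (a • y₁ + b • y₂)‖^2 := by
        rw [← inner_sub_right, real_inner_self_eq_norm_sq]
      have h7 : A * ((1/(2*A))^2 * ‖y' - (a • y₁ + b • y₂)‖^2)
          = (1/(2*A))/2 * ‖y' - (a • y₁ + b • y₂)‖^2 := by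
        have : A ≠ 0 := ne_of_gt hA0
        field_simp
      rw [h3] at h1
      rw [h4, h5] at h2
      nlinarith [h1, h2, h6, h7]
    have hb1 := hbound y₁
    have hb2 := hbound y₂
    have hv1 : ‖y₁ - (a • y₁ + b • y₂)‖^2 = b^2 * ‖y₁ - y₂‖^2 := by
      have he : y₁ - (a • y₁ + b • y₂) = b • (y₁ - y₂) := by
        have hb' : b = 1 - a := by linarith
        rw [hb']; module
      rw [he, norm_smul, Real.norm_eq_abs, abs_of_pos hb]; ring
    have hv2 : ‖y₂ - (a • y₁ + b • y₂)‖^2 = a^2 * ‖y₁ - y₂‖^2 := by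
      have he : y₂ - (a • y₁ + b • y₂) = a • (y₂ - y₁) := by
        have ha' : a = 1 - b := by linarith
        rw [ha']; module
      have hn : ‖y₂ - y₁‖ = ‖y₁ - y₂‖ := norm_sub_rev _ _
      rw [he, norm_smul, Real.norm_eq_abs, abs_of_pos ha, hn]; ring
    have hLbar : L (a • y₁ + b • y₂) = ⟪xs (a • y₁ + b • y₂), a • y₁ + b • y₂⟫
        - f (xs (a • y₁ + b • y₂)) := hLy _
    have hinner2 : ⟪xs (a • y₁ + b • y₂), a • y₁ + b • y₂⟫
        = a * ⟪xs (a • y₁ + b • y₂), y₁⟫ + b * ⟪xs (a • y₁ + b • y₂), y₂⟫ := by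
      rw [inner_add_right, real_inner_smul_right, real_inner_smul_right]
    have hΔ : 0 < ‖y₁ - y₂‖^2 := pow_pos (norm_pos_iff.2 (sub_ne_zero.2 hne)) 2
    rw [hv1] at hb1
    rw [hv2] at hb2
    have e1 := mul_le_mul_of_nonneg_left hb1 ha.le
    have e2 := mul_le_mul_of_nonneg_left hb2 hb.le
    have hfs : a * f (xs (a • y₁ + b • y₂)) + b * f (xs (a • y₁ + b • y₂))
        = f (xs (a • y₁ + b • y₂)) := by rw [← add_mul, hab, one_mul]
    have hpos : 0 < (1/(2*A))/2 * (a*b) * ‖y₁ - y₂‖^2 := by positivity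
    rw [hLbar, hinner2]
    nlinarith [e1, e2, hfs, hpos, hab, sq_nonneg (a - b)]
  -- bijectivity of the gradient
  have hgradval : ∀ u, HasGradientAt f (gradient f u) u := fun u =>
    (hdifff u).hasGradientAt
  have hinj : Function.Injective (gradient f) := by
    intro x₁ x₂ hgr
    by_contra hne
    have h1 := grad_ineq hfconv (hgradval x₁) ((1/2:ℝ) • x₁ + (1/2:ℝ) • x₂)
    have h2 := grad_ineq hfconv (hgradval x₂) ((1/2:ℝ) • x₁ + (1/2:ℝ) • x₂)
    rw [hgr] at h1
    have h3 := hfstrict.2 (mem_univ x₁) (mem_univ x₂) hne one_half_pos one_half_pos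
      (by norm_num)
    simp only [smul_eq_mul] at h3
    have h4 : ⟪gradient f x₂, ((1/2:ℝ) • x₁ + (1/2:ℝ) • x₂) - x₁⟫
        + ⟪gradient f x₂, ((1/2:ℝ) • x₁ + (1/2:ℝ) • x₂) - x₂⟫ = 0 := by
      rw [← inner_add_right]
      have h5 : (((1/2:ℝ) • x₁ + (1/2:ℝ) • x₂) - x₁) + (((1/2:ℝ) • x₁ + (1/2:ℝ) • x₂) - x₂)
          = 0 := by module
      rw [h5, inner_zero_right]
    linarith
  have hsurj : Function.Surjective (gradient f) := fun y => ⟨xs y, (hgradfxs y).gradient⟩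
  exact ⟨part1, part2, hdifff, hfstrict, hdiffL, hLstrict, hinj, hsurj⟩
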